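/- Let Z be a discrete random variable, φ a function of Z, and suppose P(Y=y | X=x, Z=z) = h(y, x, φ(z)) for some function h (i.e., the outcome model factors through φ). Then Y ⟂ Z | (X, φ(Z)). -/
import Mathlib


open Finset

attribute [local instance] Classical.propDecidable

/-- Probability of an event on a finite outcome space. -/
noncomputable def Pr {Ω : Type*} [Fintype Ω] (p : Ω → ℝ) (E : Ω → Prop) : ℝ :=
  ∑ ω, if E ω then p ω else 0

/-- Conditional probability `P(E | F)`. -/
noncomputable def condPr {Ω : Type*} [Fintype Ω] (p : Ω → ℝ) (E F : Ω → Prop) : ℝ :=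
  Pr p (fun ω => E ω ∧ F ω) / Pr p F

/-- Conditional independence of `A` and `B` given `S`, via factorization of the joint law. -/
def CondIndepOn {Ω α β γ : Type*} [Fintype Ω] (p : Ω → ℝ)
    (A : Ω → α) (B : Ω → β) (S : Ω → γ) : Prop :=
  ∀ a b s,
    Pr p (fun ω => A ω = a ∧ B ω = b ∧ S ω = s) * Pr p (fun ω => S ω = s) =
    Pr p (fun ω => A ω = a ∧ S ω = s) * Pr p (fun ω => B ω = b ∧ S ω = s)


private lemma Pr_congr {Ω : Type*} [Fintype Ω] (p : Ω → ℝ) {E E' : Ω → Prop}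
    (hEE : ∀ ω, E ω ↔ E' ω) : Pr p E = Pr p E' := by
  unfold Pr; exact Finset.sum_congr rfl fun ω _ => by rw [hEE ω]

private lemma Pr_false {Ω : Type*} [Fintype Ω] (p : Ω → ℝ) {E : Ω → Prop}
    (hE : ∀ ω, ¬ E ω) : Pr p E = 0 := by
  unfold Pr
  rw [Finset.sum_eq_zero]
  intro ω _
  simp [hE ω]

private lemma Pr_split {Ω 𝓩 F : Type*} [Fintype Ω] [Fintype 𝓩] (p : Ω → ℝ)
    (E : Ω → Prop) (Z : Ω → 𝓩) (φ : 𝓩 → F) (f : F) :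
    Pr p (fun ω => E ω ∧ φ (Z ω) = f) =
      ∑ z, if φ z = f then Pr p (fun ω => E ω ∧ Z ω = z) else 0 := by
  have h1 : ∀ z : 𝓩, (if φ z = f then Pr p (fun ω => E ω ∧ Z ω = z) else 0)
      = ∑ ω, if Z ω = z then (if E ω ∧ φ z = f then p ω else 0) else 0 := by
    intro z
    by_cases hz : φ z = f
    · simp only [hz, if_true, Pr]
      apply Finset.sum_congr rfl
      intro ω _
      by_cases h2 : Z ω = z <;> simp [h2]
    · simp [hz]
  refine Eq.trans ?_ (Finset.sum_congr rfl fun z _ => (h1 z).symm)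
  simp only [Pr]
  rw [Finset.sum_comm]
  apply Finset.sum_congr rfl
  intro ω _
  rw [Finset.sum_ite_eq Finset.univ (Z ω) (fun z => if E ω ∧ φ z = f then p ω else 0)]
  simp

/-- If the outcome model factors through `φ`, i.e.
`P(Y=y | X=x, Z=z) = h(y, x, φ z)`, then `Y ⟂ Z | (X, φ(Z))`. -/
theorem stmt19 {Ω 𝓧 𝓨 𝓩 F : Type*} [Fintype Ω] [Fintype 𝓩]
    (p : Ω → ℝ) (hp : ∀ ω, 0 ≤ p ω) (hsum : ∑ ω, p ω = 1)
    (X : Ω → 𝓧) (Y : Ω → 𝓨) (Z : Ω → 𝓩) (φ : 𝓩 → F)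
    (h : 𝓨 → 𝓧 → F → ℝ)
    (hpos : ∀ x z, 0 < Pr p (fun ω => X ω = x ∧ Z ω = z))
    (hmodel : ∀ (y : 𝓨) (x : 𝓧) (z : 𝓩),
      condPr p (fun ω => Y ω = y) (fun ω => X ω = x ∧ Z ω = z) = h y x (φ z)) :
    CondIndepOn p Y Z (fun ω => (X ω, φ (Z ω))) := by
  intro y z s
  obtain ⟨x, f⟩ := s
  -- key: joint with Z = z' factors
  have key : ∀ z' : 𝓩, Pr p (fun ω => (Y ω = y ∧ X ω = x) ∧ Z ω = z') =
      h y x (φ z') * Pr p (fun ω => X ω = x ∧ Z ω = z') := by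
    intro z'
    have hm := hmodel y x z'
    unfold condPr at hm
    rw [div_eq_iff (ne_of_gt (hpos x z'))] at hm
    rw [← hm]
    exact Pr_congr p (fun ω => by tauto)
  have keyf : Pr p (fun ω => (Y ω = y ∧ X ω = x) ∧ φ (Z ω) = f) =
      h y x f * Pr p (fun ω => X ω = x ∧ φ (Z ω) = f) := by
    rw [Pr_split p (fun ω => Y ω = y ∧ X ω = x) Z φ f,
        Pr_split p (fun ω => X ω = x) Z φ f, Finset.mul_sum]
    apply Finset.sum_congr rfl
    intro z' _
    by_cases hz : φ z' = f
    · simp only [hz, if_true]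
      rw [key z', hz]
    · simp [hz]
  by_cases hzf : φ z = f
  · have e1 : Pr p (fun ω => Y ω = y ∧ Z ω = z ∧ (X ω, φ (Z ω)) = (x, f)) =
        h y x f * Pr p (fun ω => X ω = x ∧ Z ω = z) := by
      rw [Pr_congr p (E' := fun ω => (Y ω = y ∧ X ω = x) ∧ Z ω = z)
        (fun ω => by
          constructor
          · rintro ⟨h1, h2, h3⟩
            rw [Prod.mk.injEq] at h3
            exact ⟨⟨h1, h3.1⟩, h2⟩
          · rintro ⟨⟨h1, h2⟩, h3⟩
            exact ⟨h1, h3, by rw [Prod.mk.injEq]; exact ⟨h2, h3 ▸ hzf⟩⟩),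
        key z, hzf]
    have e2 : Pr p (fun ω => Y ω = y ∧ (X ω, φ (Z ω)) = (x, f)) =
        h y x f * Pr p (fun ω => X ω = x ∧ φ (Z ω) = f) := by
      rw [Pr_congr p (E' := fun ω => (Y ω = y ∧ X ω = x) ∧ φ (Z ω) = f)
        (fun ω => by rw [Prod.mk.injEq]; tauto), keyf]
    have e3 : Pr p (fun ω => (X ω, φ (Z ω)) = (x, f)) =
        Pr p (fun ω => X ω = x ∧ φ (Z ω) = f) :=
      Pr_congr p (fun ω => by rw [Prod.mk.injEq])
    have e4 : Pr p (fun ω => Z ω = z ∧ (X ω, φ (Z ω)) = (x, f)) =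
        Pr p (fun ω => X ω = x ∧ Z ω = z) :=
      Pr_congr p (fun ω => by
        constructor
        · rintro ⟨h1, h2⟩
          rw [Prod.mk.injEq] at h2
          exact ⟨h2.1, h1⟩
        · rintro ⟨h1, h2⟩
          exact ⟨h2, by rw [Prod.mk.injEq]; exact ⟨h1, h2 ▸ hzf⟩⟩)
    rw [e1, e2, e3, e4]
    ring
  · have e1 : Pr p (fun ω => Y ω = y ∧ Z ω = z ∧ (X ω, φ (Z ω)) = (x, f)) = 0 :=
      Pr_false p (fun ω => by
        rintro ⟨h1, h2, h3⟩
        rw [Prod.mk.injEq] at h3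
        exact hzf (h2 ▸ h3.2))
    have e4 : Pr p (fun ω => Z ω = z ∧ (X ω, φ (Z ω)) = (x, f)) = 0 :=
      Pr_false p (fun ω => by
        rintro ⟨h1, h2⟩
        rw [Prod.mk.injEq] at h2
        exact hzf (h1 ▸ h2.2))
    rw [e1, e4]
    ring
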